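/- arXiv:2504.16383 — 5 statements merged into one kernel-verified Lean document; each statement's English description precedes it below -/
import Mathlib

section
/- Let ξ = (v, ω) ∈ ℝ⁶ with v, ω ∈ ℝ³ and ‖ω‖ = 1, and let θ ∈ ℝ. Then exp(θ ξ̂) is the 4×4 matrix with block form [[exp(θ ω̂), (I₃ − exp(θ ω̂))(ω × v) + ω ωᵀ v θ], [0₁ₓ₃, 1]]. -/
open Matrix

/-- The hat map: the unique 3×3 skew-symmetric matrix `ω̂` with `ω̂ x = ω × x` for all `x`. -/
noncomputable def hat (ω : Fin 3 → ℝ) : Matrix (Fin 3) (Fin 3) ℝ :=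
  !![0, -ω 2, ω 1; ω 2, 0, -ω 0; -ω 1, ω 0, 0]

/-- The se(3) hat map of a twist `ξ = (v, ω)`: the 4×4 matrix with upper-left block `ω̂`,
upper-right block `v` and zero bottom row. -/
noncomputable def se3hat (v ω : Fin 3 → ℝ) : Matrix (Fin 3 ⊕ Fin 1) (Fin 3 ⊕ Fin 1) ℝ :=
  Matrix.fromBlocks (hat ω) (Matrix.of fun i (_ : Fin 1) => v i) 0 0

namespace ExpTwistAux

noncomputable def cvec (x : Fin 3 → ℝ) : Matrix (Fin 3) (Fin 1) ℝ := Matrix.of fun i _ => x i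

lemma hat_mul_col (w x : Fin 3 → ℝ) : hat w * cvec x = cvec (crossProduct w x) := by
  ext i j
  fin_cases i <;> fin_cases j <;>
    simp [hat, cvec, Matrix.mul_apply, Fin.sum_univ_succ, crossProduct] <;> ring

lemma hat_cube (w : Fin 3 → ℝ) (hw : w 0 ^ 2 + w 1 ^ 2 + w 2 ^ 2 = 1) :
    hat w * hat w * hat w = -(hat w) := by
  ext i j
  fin_cases i <;> fin_cases j <;>
    simp [hat, Matrix.mul_apply, Fin.sum_univ_succ] <;>
  all_goals first
    | ring1
    | linear_combination w 0 * hw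
    | linear_combination w 1 * hw
    | linear_combination w 2 * hw
    | linear_combination (-(w 0)) * hw
    | linear_combination (-(w 1)) * hw
    | linear_combination (-(w 2)) * hw

lemma sq_col (w x : Fin 3 → ℝ) (hw : w 0 ^ 2 + w 1 ^ 2 + w 2 ^ 2 = 1) :
    cvec x + (hat w * hat w) * cvec x = (w ⬝ᵥ x) • cvec w := by
  ext i j
  fin_cases i <;> fin_cases j <;>
    simp [hat, cvec, Matrix.mul_apply, dotProduct, Fin.sum_univ_succ,
      Matrix.vecHead, Matrix.vecTail] <;>
  all_goals first
    | ring1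
    | linear_combination x 0 * hw
    | linear_combination x 1 * hw
    | linear_combination x 2 * hw
    | linear_combination (-(x 0)) * hw
    | linear_combination (-(x 1)) * hw
    | linear_combination (-(x 2)) * hw

lemma se3hat_pow (v w : Fin 3 → ℝ) (n : ℕ) :
    se3hat v w ^ (n + 1) = fromBlocks (hat w ^ (n + 1)) (hat w ^ n * cvec v) 0 0 := by
  induction n with
  | zero => simp [se3hat, cvec]
  | succ n ih =>
    rw [pow_succ, ih, se3hat, fromBlocks_multiply]
    simp [← pow_succ, cvec]

end ExpTwistAux

namespace ExpTwistAux

lemma hat_pow_add_three (w : Fin 3 → ℝ) (hw : w 0 ^ 2 + w 1 ^ 2 + w 2 ^ 2 = 1) (n : ℕ) :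
    hat w ^ (n + 3) = -(hat w ^ (n + 1)) := by
  have h3 : hat w ^ 3 = -(hat w) := by
    rw [pow_succ, pow_two, hat_cube w hw]
  calc hat w ^ (n + 3) = hat w ^ n * hat w ^ 3 := by rw [← pow_add]
    _ = -(hat w ^ n * hat w) := by rw [h3, mul_neg]
    _ = -(hat w ^ (n + 1)) := by rw [← pow_succ]

lemma hasSum_fromBlocks {f1 : ℕ → Matrix (Fin 3) (Fin 3) ℝ} {f2 : ℕ → Matrix (Fin 3) (Fin 1) ℝ}
    {f3 : ℕ → Matrix (Fin 1) (Fin 3) ℝ} {f4 : ℕ → Matrix (Fin 1) (Fin 1) ℝ}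
    {S1 : Matrix (Fin 3) (Fin 3) ℝ} {S2 : Matrix (Fin 3) (Fin 1) ℝ}
    {S3 : Matrix (Fin 1) (Fin 3) ℝ} {S4 : Matrix (Fin 1) (Fin 1) ℝ}
    (h1 : HasSum f1 S1) (h2 : HasSum f2 S2) (h3 : HasSum f3 S3) (h4 : HasSum f4 S4) :
    HasSum (fun n => fromBlocks (f1 n) (f2 n) (f3 n) (f4 n)) (fromBlocks S1 S2 S3 S4) := by
  have c1 : Continuous fun a : Matrix (Fin 3) (Fin 3) ℝ =>
      (fromBlocks a 0 0 0 : Matrix (Fin 3 ⊕ Fin 1) (Fin 3 ⊕ Fin 1) ℝ) := by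
    refine continuous_matrix fun i j => ?_
    cases i <;> cases j <;>
      simp only [fromBlocks_apply₁₁, fromBlocks_apply₁₂, fromBlocks_apply₂₁,
        fromBlocks_apply₂₂, Matrix.zero_apply] <;>
      first
        | exact continuous_id.matrix_elem _ _
        | exact continuous_const
  have c2 : Continuous fun a : Matrix (Fin 3) (Fin 1) ℝ =>
      (fromBlocks 0 a 0 0 : Matrix (Fin 3 ⊕ Fin 1) (Fin 3 ⊕ Fin 1) ℝ) := by
    refine continuous_matrix fun i j => ?_
    cases i <;> cases j <;>
      simp only [fromBlocks_apply₁₁, fromBlocks_apply₁₂, fromBlocks_apply₂₁,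
        fromBlocks_apply₂₂, Matrix.zero_apply] <;>
      first
        | exact continuous_id.matrix_elem _ _
        | exact continuous_const
  have c3 : Continuous fun a : Matrix (Fin 1) (Fin 3) ℝ =>
      (fromBlocks 0 0 a 0 : Matrix (Fin 3 ⊕ Fin 1) (Fin 3 ⊕ Fin 1) ℝ) := by
    refine continuous_matrix fun i j => ?_
    cases i <;> cases j <;>
      simp only [fromBlocks_apply₁₁, fromBlocks_apply₁₂, fromBlocks_apply₂₁,
        fromBlocks_apply₂₂, Matrix.zero_apply] <;>
      first
        | exact continuous_id.matrix_elem _ _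
        | exact continuous_const
  have c4 : Continuous fun a : Matrix (Fin 1) (Fin 1) ℝ =>
      (fromBlocks 0 0 0 a : Matrix (Fin 3 ⊕ Fin 1) (Fin 3 ⊕ Fin 1) ℝ) := by
    refine continuous_matrix fun i j => ?_
    cases i <;> cases j <;>
      simp only [fromBlocks_apply₁₁, fromBlocks_apply₁₂, fromBlocks_apply₂₁,
        fromBlocks_apply₂₂, Matrix.zero_apply] <;>
      first
        | exact continuous_id.matrix_elem _ _
        | exact continuous_const
  have m1 := h1.map (AddMonoidHom.mk' (fun a => (fromBlocks a 0 0 0 :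
      Matrix (Fin 3 ⊕ Fin 1) (Fin 3 ⊕ Fin 1) ℝ))
      (fun a b => by rw [fromBlocks_add]; simp)) c1
  have m2 := h2.map (AddMonoidHom.mk' (fun a => (fromBlocks 0 a 0 0 :
      Matrix (Fin 3 ⊕ Fin 1) (Fin 3 ⊕ Fin 1) ℝ))
      (fun a b => by rw [fromBlocks_add]; simp)) c2
  have m3 := h3.map (AddMonoidHom.mk' (fun a => (fromBlocks 0 0 a 0 :
      Matrix (Fin 3 ⊕ Fin 1) (Fin 3 ⊕ Fin 1) ℝ))
      (fun a b => by rw [fromBlocks_add]; simp)) c3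
  have m4 := h4.map (AddMonoidHom.mk' (fun a => (fromBlocks 0 0 0 a :
      Matrix (Fin 3 ⊕ Fin 1) (Fin 3 ⊕ Fin 1) ℝ))
      (fun a b => by rw [fromBlocks_add]; simp)) c4
  have H := ((m1.add m2).add m3).add m4
  simp only [AddMonoidHom.mk'_apply, Function.comp_def] at H
  convert H using 1
  · funext n
    simp [fromBlocks_add]
  · simp [fromBlocks_add]

end ExpTwistAux


open ExpTwistAux in
/-- For a twist `ξ = (v, ω)` with `‖ω‖ = 1`, the exponential `exp(θ ξ̂)` has block form
`[[exp(θ ω̂), (I₃ − exp(θ ω̂))(ω × v) + ω ωᵀ v θ], [0, 1]]`. -/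
theorem exp_twist_blocks (v : Fin 3 → ℝ) (ω : EuclideanSpace ℝ (Fin 3)) (hω : ‖ω‖ = 1)
    (θ : ℝ) :
    NormedSpace.exp (θ • se3hat v ω) =
      Matrix.fromBlocks (NormedSpace.exp (θ • hat ω))
        (Matrix.of fun i (_ : Fin 1) =>
          (((1 : Matrix (Fin 3) (Fin 3) ℝ) - NormedSpace.exp (θ • hat ω)).mulVec
              (crossProduct ω v) + ((ω ⬝ᵥ v) * θ) • (show Fin 3 → ℝ from ω)) i)
        0 1 := by
  classical
  letI : SeminormedRing (Matrix (Fin 3) (Fin 3) ℝ) := Matrix.linftyOpSemiNormedRing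
  letI : NormedRing (Matrix (Fin 3) (Fin 3) ℝ) := Matrix.linftyOpNormedRing
  letI : NormedAlgebra ℝ (Matrix (Fin 3) (Fin 3) ℝ) := Matrix.linftyOpNormedAlgebra
  letI : SeminormedRing (Matrix (Fin 3 ⊕ Fin 1) (Fin 3 ⊕ Fin 1) ℝ) :=
    Matrix.linftyOpSemiNormedRing
  letI : NormedRing (Matrix (Fin 3 ⊕ Fin 1) (Fin 3 ⊕ Fin 1) ℝ) := Matrix.linftyOpNormedRing
  letI : NormedAlgebra ℝ (Matrix (Fin 3 ⊕ Fin 1) (Fin 3 ⊕ Fin 1) ℝ) :=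
    Matrix.linftyOpNormedAlgebra
  have hw : ω 0 ^ 2 + ω 1 ^ 2 + ω 2 ^ 2 = 1 := by
    have h := hω
    rw [EuclideanSpace.norm_eq] at h
    have h2 : ∑ i, ‖ω i‖ ^ 2 = 1 := by
      have h3 : (Real.sqrt (∑ i, ‖ω i‖ ^ 2)) ^ 2 = 1 ^ 2 := by rw [h]
      rwa [Real.sq_sqrt (Finset.sum_nonneg fun i _ => sq_nonneg _), one_pow] at h3
    simpa [Fin.sum_univ_three, Real.norm_eq_abs, sq_abs] using h2
  set c : ℕ → ℝ := fun n => ((n.factorial : ℝ))⁻¹ * θ ^ n with hc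
  set A : Matrix (Fin 3) (Fin 3) ℝ := hat ω with hA
  set E : Matrix (Fin 3) (Fin 3) ℝ := NormedSpace.exp (θ • A) with hEdef
  have hE : HasSum (fun n => c n • A ^ n) E := by
    have h := NormedSpace.exp_series_hasSum_exp' (𝕂 := ℝ) (θ • A)
    simp only [smul_pow, smul_smul, hc] at h
    exact h
  have hM : HasSum (fun n => c n • se3hat v ω ^ n) (NormedSpace.exp (θ • se3hat v ω)) := by
    have h := NormedSpace.exp_series_hasSum_exp' (𝕂 := ℝ) (θ • se3hat v ω)
    simp only [smul_pow, smul_smul, hc] at h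
    exact h
  set B : Matrix (Fin 3) (Fin 1) ℝ := cvec (crossProduct ω v) with hBdef
  have hB : B = A * cvec v := (hat_mul_col ω v).symm
  have hEB : HasSum (fun n => c n • (A ^ n * B)) (E * B) := by
    have h := hE.map ((AddMonoidHom.mk' (fun X : Matrix (Fin 3) (Fin 3) ℝ => X * B)
      (fun a b => Matrix.add_mul a b B) :
      Matrix (Fin 3) (Fin 3) ℝ →+ Matrix (Fin 3) (Fin 1) ℝ))
      (continuous_id.matrix_mul continuous_const)
    simpa only [AddMonoidHom.mk'_apply, Function.comp_def, Matrix.smul_mul] using h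
  set N : ℕ → Matrix (Fin 3) (Fin 1) ℝ :=
    fun n => match n with
      | 0 => 0
      | (m + 1) => A ^ m * cvec v
    with hN
  set T2 : Matrix (Fin 3) (Fin 1) ℝ :=
    B - E * B + θ • (cvec v + (A * A) * cvec v) with hT2
  have hC : HasSum (fun n => (if n = 0 then B else 0) - c n • (A ^ n * B)
      + (if n = 1 then θ • (cvec v + (A * A) * cvec v) else 0)) T2 :=
    ((hasSum_ite_eq 0 B).sub hEB).add (hasSum_ite_eq 1 _)
  have hfun : (fun n => (if n = 0 then B else 0) - c n • (A ^ n * B)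
      + (if n = 1 then θ • (cvec v + (A * A) * cvec v) else 0)) = fun n => c n • N n := by
    funext n
    match n with
    | 0 => simp [hc, hN]
    | 1 =>
      have hN1 : N 1 = cvec v := by simp [hN]
      have h1 : A ^ 1 * B = A * A * cvec v := by
        rw [hB, pow_one, ← Matrix.mul_assoc]
      have hc1 : c 1 = θ := by simp [hc]
      rw [hN1, h1, hc1, if_neg one_ne_zero, if_pos rfl]
      module
    | (m + 2) =>
      have key : A ^ (m + 2) * B = -(A ^ (m + 1) * cvec v) := by
        rw [hB, ← Matrix.mul_assoc, ← pow_succ]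
        rw [show m + 2 + 1 = m + 3 from rfl, hA, hat_pow_add_three ω hw m, Matrix.neg_mul]
      simp only [hN, key]
      simp [smul_neg]
  rw [hfun] at hC
  have hterm : ∀ n, c n • se3hat v ω ^ n
      = Matrix.fromBlocks (c n • A ^ n) (c n • N n) 0 ((if n = 0 then 1 else 0)) := by
    intro n
    match n with
    | 0 => simp [hc, hN, ← Matrix.fromBlocks_one]
    | (m + 1) =>
      rw [se3hat_pow v ω m, ← hA]
      simp [hN, Matrix.fromBlocks_smul]
  have hT : HasSum (fun n => c n • se3hat v ω ^ n) (Matrix.fromBlocks E T2 0 1) := by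
    have h := hasSum_fromBlocks hE hC hasSum_zero
      (hasSum_ite_eq 0 (1 : Matrix (Fin 1) (Fin 1) ℝ))
    rw [show (fun n => Matrix.fromBlocks (c n • A ^ n) (c n • N n)
        (0 : Matrix (Fin 1) (Fin 3) ℝ) (if n = 0 then 1 else 0))
      = fun n => c n • se3hat v ω ^ n from funext fun n => (hterm n).symm] at h
    exact h
  have hmain : NormedSpace.exp (θ • se3hat v ω) = Matrix.fromBlocks E T2 0 1 := hM.unique hT
  have hT2' : T2 = Matrix.of fun i (_ : Fin 1) =>
      (((1 : Matrix (Fin 3) (Fin 3) ℝ) - E).mulVec (crossProduct ω v)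
        + ((ω ⬝ᵥ v) * θ) • (show Fin 3 → ℝ from ω)) i := by
    have hsq : cvec v + (A * A) * cvec v = ((show Fin 3 → ℝ from ω) ⬝ᵥ v) • cvec ω :=
      sq_col ω v hw
    rw [hT2, hsq]
    ext i j
    fin_cases j
    simp only [hBdef, Matrix.add_apply, Matrix.sub_apply, Matrix.smul_apply, Matrix.of_apply,
      ExpTwistAux.cvec, Pi.add_apply, Pi.sub_apply, Pi.smul_apply, smul_eq_mul,
      Matrix.sub_mulVec, Matrix.one_mulVec, Matrix.mulVec, Matrix.mul_apply, dotProduct]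
    ring
  rw [hmain, hT2']
end

section
/- Let ω, q ∈ ℝ³ with ‖ω‖ = 1, let ξ = (−ω × q, ω) ∈ ℝ⁶ (a zero-pitch revolute twist with axis through q in direction ω), and let θ ∈ ℝ. Then exp(θ ξ̂) = [[exp(θ ω̂), (I₃ − exp(θ ω̂)) q], [0₁ₓ₃, 1]]. -/
open Matrix

/-- The ring hom embedding a pair of matrices as a block-diagonal matrix. -/
noncomputable def blockDiagHom :
    (Matrix (Fin 3) (Fin 3) ℝ × Matrix (Fin 1) (Fin 1) ℝ) →+*
      Matrix (Fin 3 ⊕ Fin 1) (Fin 3 ⊕ Fin 1) ℝ where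
  toFun p := Matrix.fromBlocks p.1 0 0 p.2
  map_one' := Matrix.fromBlocks_one
  map_mul' p q := by
    rw [Prod.fst_mul, Prod.snd_mul, Matrix.fromBlocks_multiply]
    simp
  map_zero' := by simp
  map_add' p q := by
    rw [Prod.fst_add, Prod.snd_add, Matrix.fromBlocks_add]
    simp

lemma continuous_blockDiagHom : Continuous blockDiagHom := by
  apply continuous_matrix
  intro i j
  cases i <;> cases j <;>
    simp only [blockDiagHom, RingHom.coe_mk, MonoidHom.coe_mk, OneHom.coe_mk,
      Matrix.fromBlocks_apply₁₁, Matrix.fromBlocks_apply₁₂, Matrix.fromBlocks_apply₂₁,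
      Matrix.fromBlocks_apply₂₂, Matrix.zero_apply]
  · exact (continuous_fst.matrix_elem _ _)
  · exact continuous_const
  · exact continuous_const
  · exact (continuous_snd.matrix_elem _ _)

lemma exp_fromBlocks_diag (A : Matrix (Fin 3) (Fin 3) ℝ) :
    NormedSpace.exp (Matrix.fromBlocks A 0 0 (0 : Matrix (Fin 1) (Fin 1) ℝ)) =
      Matrix.fromBlocks (NormedSpace.exp A) 0 0 1 := by
  letI : SeminormedRing (Matrix (Fin 3) (Fin 3) ℝ) := Matrix.linftyOpSemiNormedRing
  letI : NormedRing (Matrix (Fin 3) (Fin 3) ℝ) := Matrix.linftyOpNormedRing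
  letI : NormedAlgebra ℝ (Matrix (Fin 3) (Fin 3) ℝ) := Matrix.linftyOpNormedAlgebra
  letI : SeminormedRing (Matrix (Fin 1) (Fin 1) ℝ) := Matrix.linftyOpSemiNormedRing
  letI : NormedRing (Matrix (Fin 1) (Fin 1) ℝ) := Matrix.linftyOpNormedRing
  letI : NormedAlgebra ℝ (Matrix (Fin 1) (Fin 1) ℝ) := Matrix.linftyOpNormedAlgebra
  letI : SeminormedRing (Matrix (Fin 3 ⊕ Fin 1) (Fin 3 ⊕ Fin 1) ℝ) :=
    Matrix.linftyOpSemiNormedRing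
  letI : NormedRing (Matrix (Fin 3 ⊕ Fin 1) (Fin 3 ⊕ Fin 1) ℝ) := Matrix.linftyOpNormedRing
  letI : NormedAlgebra ℝ (Matrix (Fin 3 ⊕ Fin 1) (Fin 3 ⊕ Fin 1) ℝ) :=
    Matrix.linftyOpNormedAlgebra
  letI : NormedAlgebra ℚ (Matrix (Fin 3) (Fin 3) ℝ) := .restrictScalars ℚ ℝ _
  letI : NormedAlgebra ℚ (Matrix (Fin 1) (Fin 1) ℝ) := .restrictScalars ℚ ℝ _
  letI : NormedAlgebra ℚ (Matrix (Fin 3 ⊕ Fin 1) (Fin 3 ⊕ Fin 1) ℝ) := .restrictScalars ℚ ℝ _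
  have h := NormedSpace.map_exp blockDiagHom continuous_blockDiagHom
    ((A, 0) : Matrix (Fin 3) (Fin 3) ℝ × Matrix (Fin 1) (Fin 1) ℝ)
  have hprod : NormedSpace.exp ((A, 0) : Matrix (Fin 3) (Fin 3) ℝ × Matrix (Fin 1) (Fin 1) ℝ)
      = (NormedSpace.exp A, 1) := by
    ext1
    · erw [Prod.fst_exp]; rfl
    · erw [Prod.snd_exp]; exact NormedSpace.exp_zero
  erw [hprod] at h
  simp [blockDiagHom] at h; exact h.symm

/-- For a zero-pitch revolute twist `ξ = (−ω × q, ω)` with unit axis direction `ω` passing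
through the point `q`, the exponential satisfies
`exp(θ ξ̂) = [[exp(θ ω̂), (I₃ − exp(θ ω̂)) q], [0, 1]]`. -/
theorem exp_revolute_twist (ω : EuclideanSpace ℝ (Fin 3)) (q : Fin 3 → ℝ) (hω : ‖ω‖ = 1)
    (θ : ℝ) :
    NormedSpace.exp (θ • se3hat (-(crossProduct ω q)) ω) =
      Matrix.fromBlocks (NormedSpace.exp (θ • hat ω))
        (Matrix.of fun i (_ : Fin 1) =>
          (((1 : Matrix (Fin 3) (Fin 3) ℝ) - NormedSpace.exp (θ • hat ω)).mulVec q) i)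
        0 1 := by
  set C : Matrix (Fin 3) (Fin 1) ℝ := Matrix.of fun i (_ : Fin 1) => q i with hC
  set T : Matrix (Fin 3 ⊕ Fin 1) (Fin 3 ⊕ Fin 1) ℝ := Matrix.fromBlocks 1 C 0 1 with hT
  set T' : Matrix (Fin 3 ⊕ Fin 1) (Fin 3 ⊕ Fin 1) ℝ := Matrix.fromBlocks 1 (-C) 0 1 with hT'
  have hTT' : T * T' = 1 := by
    rw [hT, hT', Matrix.fromBlocks_multiply]
    simp [Matrix.fromBlocks_one]
  have hT'T : T' * T = 1 := by
    rw [hT, hT', Matrix.fromBlocks_multiply]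
    simp [Matrix.fromBlocks_one]
  set U : (Matrix (Fin 3 ⊕ Fin 1) (Fin 3 ⊕ Fin 1) ℝ)ˣ := ⟨T, T', hTT', hT'T⟩ with hU
  have hcol : (θ • hat ω) * (-C) =
      θ • Matrix.of fun i (_ : Fin 1) => (-(crossProduct ω q)) i := by
    ext i j
    fin_cases i <;> fin_cases j <;>
      simp [hat, crossProduct, hC, Matrix.mul_apply, Fin.sum_univ_three] <;> ring
  have hkey : θ • se3hat (-(crossProduct ω q)) ω =
      T * Matrix.fromBlocks (θ • hat ω) 0 0 0 * T' := by
    rw [hT, hT', Matrix.fromBlocks_multiply, Matrix.fromBlocks_multiply]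
    simp only [Matrix.mul_zero, Matrix.zero_mul, Matrix.one_mul, Matrix.mul_one, add_zero,
      zero_add, Matrix.mul_zero]
    rw [hcol, se3hat, Matrix.fromBlocks_smul]
    simp
  have hconj := Matrix.exp_units_conj U (Matrix.fromBlocks (θ • hat ω) 0 0 0)
  have hUval : (U : Matrix (Fin 3 ⊕ Fin 1) (Fin 3 ⊕ Fin 1) ℝ) = T := rfl
  have hUinv : ((U⁻¹ : (Matrix (Fin 3 ⊕ Fin 1) (Fin 3 ⊕ Fin 1) ℝ)ˣ) :
      Matrix (Fin 3 ⊕ Fin 1) (Fin 3 ⊕ Fin 1) ℝ) = T' := rfl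
  rw [hUval, hUinv] at hconj
  rw [hkey, hconj, exp_fromBlocks_diag, hT, hT',
    Matrix.fromBlocks_multiply, Matrix.fromBlocks_multiply]
  simp only [Matrix.mul_zero, Matrix.zero_mul, Matrix.one_mul, Matrix.mul_one, add_zero,
    zero_add]
  ext i j
  cases i <;> cases j <;>
    simp [hC, Matrix.sub_mulVec, Matrix.one_mulVec, Matrix.mulVec, Matrix.mul_apply,
      Matrix.one_apply, dotProduct, sub_eq_neg_add, add_mul, Finset.sum_add_distrib,
      ite_mul, Finset.sum_ite_eq, Fin.sum_univ_three] <;> ring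
end

section
/- Let ξ₁, …, ξ_n be p×p real matrices, and for θ ∈ ℝ^n and 1 ≤ β ≤ n define L_β(θ) := exp(θ₁ ξ₁) ⋯ exp(θ_{β−1} ξ_{β−1}) and the instantaneous joint twist η_β(θ) := L_β(θ) ξ_β L_β(θ)⁻¹. Then for all 1 ≤ k, β ≤ n: (i) if k ≤ β − 1, then ∂η_β/∂θ_k = η_k(θ) η_β(θ) − η_β(θ) η_k(θ); (ii) if k ≥ β, then ∂η_β/∂θ_k = 0. -/
open Matrix

section ListDecomp

/-- Decomposition of the sorted list of indices below `β` at an index `k < β`. -/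
theorem filter_lt_decomp {n : ℕ} (k β : Fin n) (h : k < β) :
    (List.finRange n).filter (fun m => m < β) =
      ((List.finRange n).filter (fun m => m < k)) ++
        k :: ((List.finRange n).filter (fun m => k < m ∧ m < β)) := by
  haveI : Std.Antisymm (α := Fin n) (· < ·) := ⟨fun a b hab hba => absurd hba (lt_asymm hab)⟩
  have hsf : (List.finRange n).Pairwise (· < ·) := List.pairwise_lt_finRange n
  have hnf : (List.finRange n).Nodup := List.nodup_finRange n
  refine (fun hp h1 h2 => List.Perm.eq_of_pairwise' (r := (· < ·)) h1 h2 hp) ?_ ?_ ?_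
  · apply (List.perm_ext_iff_of_nodup (hnf.filter _) _).mpr
    · intro a
      simp only [List.mem_filter, List.mem_finRange, true_and, decide_eq_true_eq,
        List.mem_append, List.mem_cons]
      constructor
      · intro ha
        rcases lt_trichotomy a k with h1 | h1 | h1
        · exact Or.inl h1
        · exact Or.inr (Or.inl h1)
        · exact Or.inr (Or.inr ⟨h1, ha⟩)
      · rintro (h1 | rfl | ⟨h1, h2⟩)
        · exact lt_trans h1 h
        · exact h
        · exact h2
    · refine List.Nodup.append (hnf.filter _) (List.nodup_cons.mpr ⟨?_, hnf.filter _⟩) ?_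
      · intro hk
        have := (List.mem_filter.mp hk).2
        simp only [decide_eq_true_eq] at this
        exact absurd this.1 (lt_irrefl k)
      · intro a ha hb
        have h1 := (List.mem_filter.mp ha).2
        simp only [decide_eq_true_eq] at h1
        simp only [List.mem_cons] at hb
        rcases hb with rfl | hb
        · exact absurd h1 (lt_irrefl a)
        · have h2 := (List.mem_filter.mp hb).2
          simp only [decide_eq_true_eq] at h2
          exact absurd (lt_trans h1 h2.1) (lt_irrefl a)
  · exact hsf.filter _
  · refine List.pairwise_append.mpr ⟨hsf.filter _, ?_, ?_⟩
    · refine List.pairwise_cons.mpr ⟨?_, hsf.filter _⟩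
      intro b hb
      have h2 := (List.mem_filter.mp hb).2
      simp only [decide_eq_true_eq] at h2
      exact h2.1
    · intro a ha b hb
      have h1 := (List.mem_filter.mp ha).2
      simp only [decide_eq_true_eq] at h1
      simp only [List.mem_cons] at hb
      rcases hb with rfl | hb
      · exact h1
      · have h2 := (List.mem_filter.mp hb).2
        simp only [decide_eq_true_eq] at h2
        exact lt_trans h1 h2.1

end ListDecomp

section KeySlope

/-- Derivative (as a slope limit, stated with the canonical product topology on matrices)
of `s ↦ P * (exp (s • A) * C * exp (-(s • A))) * Q`. -/
theorem key_slope {p : ℕ} (P Q A C : Matrix (Fin p) (Fin p) ℝ) (t : ℝ) :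
    Filter.Tendsto
      (slope (fun s : ℝ =>
        P * (NormedSpace.exp (s • A) * C * NormedSpace.exp (-(s • A))) * Q) t)
      (nhdsWithin t {t}ᶜ)
      (nhds (P * (A * (NormedSpace.exp (t • A) * C * NormedSpace.exp (-(t • A))) -
        (NormedSpace.exp (t • A) * C * NormedSpace.exp (-(t • A))) * A) * Q)) := by
  letI : SeminormedRing (Matrix (Fin p) (Fin p) ℝ) := Matrix.linftyOpSemiNormedRing
  letI : NormedRing (Matrix (Fin p) (Fin p) ℝ) := Matrix.linftyOpNormedRing
  letI : NormedAlgebra ℝ (Matrix (Fin p) (Fin p) ℝ) := Matrix.linftyOpNormedAlgebra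
  apply hasDerivAt_iff_tendsto_slope.mp
  have h1 : HasDerivAt (fun s : ℝ => NormedSpace.exp (s • A))
      (A * NormedSpace.exp (t • A)) t := hasDerivAt_exp_smul_const' A t
  have h2 : HasDerivAt (fun s : ℝ => NormedSpace.exp (-(s • A)))
      (-(A * NormedSpace.exp (-(t • A)))) t := by
    have hneg : HasDerivAt (fun s : ℝ => -s) (-1 : ℝ) t := (hasDerivAt_id t).neg
    have := (hasDerivAt_exp_smul_const' A (-t)).scomp t hneg
    simp [Function.comp_def] at this
    exact this
  have h3 := ((h1.mul_const C).mul h2).const_mul P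
  have h4 := h3.mul_const Q
  convert h4 using 1
  · rfl
  · rfl
  have hc : A * NormedSpace.exp (-(t • A)) = NormedSpace.exp (-(t • A)) * A :=
    ((((Commute.refl A).smul_right (t : ℝ)).neg_right).exp_right).eq
  rw [hc]
  noncomm_ring

end KeySlope

section Aux

theorem isUnit_expProd {p : ℕ} (l : List (Matrix (Fin p) (Fin p) ℝ))
    (hl : ∀ x ∈ l, ∃ B, x = NormedSpace.exp B) : IsUnit l.prod := by
  apply List.prod_isUnit
  intro x hx
  obtain ⟨B, rfl⟩ := hl x hx
  exact Matrix.isUnit_exp B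

theorem isUnit_poeBefore' {p n : ℕ} (ξ : Fin n → Matrix (Fin p) (Fin p) ℝ)
    (θ : Fin n → ℝ) (β : Fin n) :
    IsUnit ((((List.finRange n).filter (fun m => m < β)).map fun m =>
      NormedSpace.exp (θ m • ξ m)).prod) := by
  apply isUnit_expProd
  intro x hx
  simp only [List.mem_map] at hx
  obtain ⟨m, _, rfl⟩ := hx
  exact ⟨_, rfl⟩

end Aux

attribute [local instance] Matrix.normedAddCommGroup Matrix.normedSpace

/-- The partial product of exponentials `L_β(θ) = exp(θ₁ ξ₁) ⋯ exp(θ_{β−1} ξ_{β−1})`. -/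
noncomputable def poeBefore {p n : ℕ} (ξ : Fin n → Matrix (Fin p) (Fin p) ℝ)
    (θ : Fin n → ℝ) (β : Fin n) : Matrix (Fin p) (Fin p) ℝ :=
  ((((List.finRange n).filter (fun m => m < β)).map fun m =>
      NormedSpace.exp (θ m • ξ m)).prod)

/-- The instantaneous joint twist `η_β(θ) = L_β(θ) ξ_β L_β(θ)⁻¹`. -/
noncomputable def eta {p n : ℕ} (ξ : Fin n → Matrix (Fin p) (Fin p) ℝ)
    (θ : Fin n → ℝ) (β : Fin n) : Matrix (Fin p) (Fin p) ℝ :=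
  poeBefore ξ θ β * ξ β * (poeBefore ξ θ β)⁻¹

theorem isUnit_poeBefore {p n : ℕ} (ξ : Fin n → Matrix (Fin p) (Fin p) ℝ)
    (θ : Fin n → ℝ) (β : Fin n) : IsUnit (poeBefore ξ θ β) :=
  isUnit_poeBefore' ξ θ β

theorem poeBefore_update_of_le {p n : ℕ} (ξ : Fin n → Matrix (Fin p) (Fin p) ℝ)
    (θ : Fin n → ℝ) (k β : Fin n) (h : β ≤ k) (s : ℝ) :
    poeBefore ξ (Function.update θ k s) β = poeBefore ξ θ β := by
  unfold poeBefore
  congr 1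
  apply List.map_congr_left
  intro m hm
  have hmβ : m < β := by
    have := (List.mem_filter.mp hm).2
    simpa [Function.comp_def] using this
  rw [Function.update_of_ne (ne_of_lt (lt_of_lt_of_le hmβ h))]

theorem poeBefore_update {p n : ℕ} (ξ : Fin n → Matrix (Fin p) (Fin p) ℝ)
    (θ : Fin n → ℝ) (k β : Fin n) (h : k < β) (s : ℝ) :
    poeBefore ξ (Function.update θ k s) β =
      poeBefore ξ θ k * (NormedSpace.exp (s • ξ k) *
        (((List.finRange n).filter (fun m => k < m ∧ m < β)).map
          (fun m => NormedSpace.exp (θ m • ξ m))).prod) := by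
  unfold poeBefore
  rw [filter_lt_decomp k β h, List.map_append, List.prod_append, List.map_cons, List.prod_cons]
  congr 1
  · apply congrArg
    apply List.map_congr_left
    intro m hm
    have hmk : m < k := by
      have := (List.mem_filter.mp hm).2
      simpa [Function.comp_def] using this
    rw [Function.update_of_ne (ne_of_lt hmk)]
  · congr 1
    · rw [Function.update_self]
    · apply congrArg
      apply List.map_congr_left
      intro m hm
      have hmk : k < m := by
        have := (List.mem_filter.mp hm).2
        simp only [decide_eq_true_eq] at this
        exact this.1
      rw [Function.update_of_ne (ne_of_gt hmk)]

/-- Partial derivatives of the instantaneous joint twists: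
if `k ≤ β − 1` then `∂η_β/∂θ_k = η_k η_β − η_β η_k`, and if `k ≥ β` then `∂η_β/∂θ_k = 0`. -/
theorem deriv_instantaneous_twist {p n : ℕ} (ξ : Fin n → Matrix (Fin p) (Fin p) ℝ)
    (θ : Fin n → ℝ) (k β : Fin n) :
    (k < β →
      HasDerivAt (fun s : ℝ => eta ξ (Function.update θ k s) β)
        (eta ξ θ k * eta ξ θ β - eta ξ θ β * eta ξ θ k) (θ k)) ∧
    (β ≤ k →
      HasDerivAt (fun s : ℝ => eta ξ (Function.update θ k s) β) 0 (θ k)) := by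
  constructor
  · intro hkβ
    set A := poeBefore ξ θ k with hA
    set M := (((List.finRange n).filter (fun m => k < m ∧ m < β)).map
      (fun m => NormedSpace.exp (θ m • ξ m))).prod with hM
    set C := M * ξ β * M⁻¹ with hC
    set t := θ k with ht
    -- rewrite the function
    have hinv : ∀ s : ℝ, (NormedSpace.exp (s • ξ k))⁻¹ = NormedSpace.exp (-(s • ξ k)) := by
      intro s
      rw [Matrix.exp_neg]
    have hfun : ∀ s : ℝ, eta ξ (Function.update θ k s) β =
        A * (NormedSpace.exp (s • ξ k) * C * NormedSpace.exp (-(s • ξ k))) * A⁻¹ := by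
      intro s
      rw [eta, poeBefore_update ξ θ k β hkβ s, Matrix.mul_inv_rev, Matrix.mul_inv_rev, hinv, hC]
      noncomm_ring
    have hAu : IsUnit A := isUnit_poeBefore ξ θ k
    have hAi : A⁻¹ * A = 1 :=
      Matrix.nonsing_inv_mul A ((Matrix.isUnit_iff_isUnit_det A).mp hAu)
    set X := NormedSpace.exp (t • ξ k) * C * NormedSpace.exp (-(t • ξ k)) with hX
    have hβ : eta ξ θ β = A * X * A⁻¹ := by
      have := hfun t
      rwa [ht, Function.update_eq_self] at this
    have hk : eta ξ θ k = A * ξ k * A⁻¹ := rfl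
    have hconj : ∀ U V : Matrix (Fin p) (Fin p) ℝ,
        (A * U * A⁻¹) * (A * V * A⁻¹) = A * (U * V) * A⁻¹ := by
      intro U V
      rw [show (A * U * A⁻¹) * (A * V * A⁻¹) = A * U * (A⁻¹ * A) * (V * A⁻¹) from by
        noncomm_ring, hAi]
      noncomm_ring
    have htarget : eta ξ θ k * eta ξ θ β - eta ξ θ β * eta ξ θ k =
        A * (ξ k * X - X * ξ k) * A⁻¹ := by
      rw [hk, hβ, hconj, hconj]
      noncomm_ring
    have hfun' : (fun s : ℝ => eta ξ (Function.update θ k s) β) =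
        fun s : ℝ => A * (NormedSpace.exp (s • ξ k) * C *
          NormedSpace.exp (-(s • ξ k))) * A⁻¹ := funext hfun
    rw [hfun', htarget]
    exact hasDerivAt_iff_tendsto_slope.mpr (key_slope A A⁻¹ (ξ k) C t)
  · intro hβk
    have hfun : (fun s : ℝ => eta ξ (Function.update θ k s) β) = fun _ => eta ξ θ β := by
      funext s
      rw [eta, eta, poeBefore_update_of_le ξ θ k β hβk s]
    rw [hfun]
    exact hasDerivAt_const _ _
end

section
/- Let n ∈ ℕ, and for each m ∈ {1,…,n} let ω_m, q_m ∈ ℝ³ with ‖ω_m‖ = 1 and ξ_m := (−ω_m × q_m, ω_m) ∈ ℝ⁶. Define G(θ) := exp(θ₁ ξ̂₁) ⋯ exp(θ_n ξ̂_n) for θ ∈ ℝ^n. Then (i) every entry of G(θ) is a finite real-linear combination of the functions θ ↦ Π_{m=1}^{n} sin^{a_m}(θ_m) cos^{b_m}(θ_m) with nonnegative integers a_m, b_m satisfying a_m + b_m ≤ 1 for every m; and (ii) for every constant 4×4 real matrix X, every entry of θ ↦ G(θ)ᵀ X G(θ) is a finite real-linear combination of the functions θ ↦ Π_{m=1}^{n}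 sin^{a_m}(θ_m) cos^{b_m}(θ_m) with a_m + b_m ≤ 2 for every m. -/
open Matrix

/-- The trigonometric monomials `θ ↦ Π_m sin^{a_m}(θ_m) cos^{b_m}(θ_m)` with
per-joint degree `a_m + b_m ≤ d`. -/
def trigMonomials (n d : ℕ) : Set ((Fin n → ℝ) → ℝ) :=
  {f | ∃ a b : Fin n → ℕ, (∀ m, a m + b m ≤ d) ∧
    f = fun θ => ∏ m : Fin n, Real.sin (θ m) ^ a m * Real.cos (θ m) ^ b m}

/-! ### Auxiliary machinery -/

set_option linter.unreachableTactic false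
set_option linter.unusedTactic false

section Aux

variable {N : Type*} [Fintype N] [DecidableEq N]

lemma pow_odd_of_cube {A : Matrix N N ℝ} (hA : A ^ 3 = -A) (k : ℕ) :
    A ^ (2 * k + 1) = ((-1 : ℝ) ^ k) • A := by
  induction k with
  | zero => simp
  | succ k ih =>
      have h2 : A ^ (2 * (k + 1) + 1) = A ^ (2 * k + 1) * A ^ 2 := by
        rw [← pow_add]; ring_nf
      rw [h2, ih, smul_mul_assoc, ← pow_succ']
      show ((-1:ℝ))^k • A ^ 3 = _
      rw [hA, smul_neg, pow_succ]
      simp [mul_smul]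

lemma pow_even_of_cube {A : Matrix N N ℝ} (hA : A ^ 3 = -A) (k : ℕ) :
    A ^ (2 * (k + 1)) = ((-1 : ℝ) ^ k) • A ^ 2 := by
  have h : 2 * (k + 1) = (2 * k + 1) + 1 := by omega
  rw [h, pow_succ, pow_odd_of_cube hA, smul_mul_assoc, ← pow_two]

lemma exp_smul_of_cube {A : Matrix N N ℝ} (hA : A ^ 3 = -A) (t : ℝ) :
    NormedSpace.exp (t • A) = 1 + Real.sin t • A + (1 - Real.cos t) • (A ^ 2) := by
  letI : SeminormedRing (Matrix N N ℝ) := Matrix.linftyOpSemiNormedRing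
  letI : NormedRing (Matrix N N ℝ) := Matrix.linftyOpNormedRing
  letI : NormedAlgebra ℝ (Matrix N N ℝ) := Matrix.linftyOpNormedAlgebra
  have hsum := NormedSpace.expSeries_hasSum_exp (𝕂 := ℝ) (t • A)
  simp only [NormedSpace.expSeries_apply_eq] at hsum
  set f : ℕ → Matrix N N ℝ := fun n => ((n.factorial : ℝ))⁻¹ • (t • A) ^ n with hf
  have hfn : ∀ n, f n = (t ^ n / n.factorial) • A ^ n := by
    intro n
    simp [hf, smul_pow, smul_smul, div_eq_inv_mul, mul_comm]
  have hodd : HasSum (fun k => f (2 * k + 1)) (Real.sin t • A) := by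
    have h := (Real.hasSum_sin t).smul_const A
    refine HasSum.congr_fun h fun k => ?_
    rw [hfn, pow_odd_of_cube hA, smul_smul]
    congr 1
    ring
  have hg : HasSum (fun k : ℕ => ((-1:ℝ)^k * t^(2*k)/(2*k).factorial) • (A^2))
      (Real.cos t • A^2) := (Real.hasSum_cos t).smul_const _
  have hg1 : HasSum (fun k : ℕ => ((-1:ℝ)^(k+1) * t^(2*(k+1))/(2*(k+1)).factorial) • (A^2))
      (Real.cos t • A^2 - A^2) := by
    have h := (hasSum_nat_add_iff'
      (f := fun k => ((-1:ℝ)^k * t^(2*k)/(2*k).factorial) • (A^2)) 1).2 hg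
    simpa using h
  have htail : HasSum (fun k : ℕ => f (2*(k+1))) ((1 - Real.cos t) • A^2) := by
    have h := hg1.neg
    have h2 : -(Real.cos t • A^2 - A^2) = (1 - Real.cos t) • A^2 := by
      rw [sub_smul, one_smul]; abel
    rw [h2] at h
    refine HasSum.congr_fun h fun k => ?_
    rw [hfn, pow_even_of_cube hA, smul_smul, ← neg_smul]
    congr 1
    rw [pow_succ]
    ring
  have heven : HasSum (fun k : ℕ => f (2 * k)) ((1 - Real.cos t) • A^2 + 1) := by
    have h := (hasSum_nat_add_iff (f := fun k => f (2*k)) 1).1 htail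
    simpa [hf] using h
  have hfinal := (heven.even_add_odd hodd).unique hsum
  refine Eq.trans hfinal.symm ?_
  abel

lemma se3hat_cube (ω q : Fin 3 → ℝ) (h : ω 0 ^ 2 + ω 1 ^ 2 + ω 2 ^ 2 = 1) :
    (se3hat (-(crossProduct ω q)) ω) ^ 3 = -(se3hat (-(crossProduct ω q)) ω) := by
  ext i j
  rcases i with i | i <;> rcases j with j | j <;> fin_cases i <;> fin_cases j <;>
    simp [se3hat, hat, pow_succ, Matrix.mul_apply, Fintype.sum_sum_type,
      Fin.sum_univ_succ, crossProduct] <;>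
    first
    | ring1
    | linear_combination (ω 0) * h
    | linear_combination (-(ω 0)) * h
    | linear_combination (ω 1) * h
    | linear_combination (-(ω 1)) * h
    | linear_combination (ω 2) * h
    | linear_combination (-(ω 2)) * h
    | linear_combination (ω 1 * q 2 - ω 2 * q 1) * h
    | linear_combination (ω 2 * q 1 - ω 1 * q 2) * h
    | linear_combination (ω 2 * q 0 - ω 0 * q 2) * h
    | linear_combination (ω 0 * q 2 - ω 2 * q 0) * h
    | linear_combination (ω 0 * q 1 - ω 1 * q 0) * h
    | linear_combination (ω 1 * q 0 - ω 0 * q 1) * h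

/-- Trigonometric monomials with per-variable degree bounds. -/
def trigMon (n : ℕ) (d : Fin n → ℕ) : Set ((Fin n → ℝ) → ℝ) :=
  {f | ∃ a b : Fin n → ℕ, (∀ m, a m + b m ≤ d m) ∧
    f = fun θ => ∏ m : Fin n, Real.sin (θ m) ^ a m * Real.cos (θ m) ^ b m}

lemma trigMon_const (n d : ℕ) : trigMon n (fun _ => d) = trigMonomials n d := rfl

lemma one_mem_trigMon {n : ℕ} {d : Fin n → ℕ} : (1 : (Fin n → ℝ) → ℝ) ∈ trigMon n d := by
  refine ⟨0, 0, by simp, ?_⟩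
  funext θ
  simp

lemma const_mem_span_trigMon {n : ℕ} {d : Fin n → ℕ} (c : ℝ) :
    (fun _ : Fin n → ℝ => c) ∈ Submodule.span ℝ (trigMon n d) := by
  have h : (fun _ : Fin n → ℝ => c) = c • (1 : (Fin n → ℝ) → ℝ) := by
    funext θ; simp
  rw [h]
  exact Submodule.smul_mem _ c (Submodule.subset_span one_mem_trigMon)

lemma sin_mem_trigMon {n : ℕ} (j : Fin n) :
    (fun θ : Fin n → ℝ => Real.sin (θ j)) ∈ trigMon n (Pi.single j 1) := by
  refine ⟨Pi.single j 1, 0, by simp, ?_⟩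
  funext θ
  rw [Finset.prod_eq_single j (fun m _ hm => by simp [Pi.single_eq_of_ne hm]) (by simp)]
  simp

lemma cos_mem_trigMon {n : ℕ} (j : Fin n) :
    (fun θ : Fin n → ℝ => Real.cos (θ j)) ∈ trigMon n (Pi.single j 1) := by
  refine ⟨0, Pi.single j 1, by simp, ?_⟩
  funext θ
  rw [Finset.prod_eq_single j (fun m _ hm => by simp [Pi.single_eq_of_ne hm]) (by simp)]
  simp

lemma mul_mem_span_trigMon {n : ℕ} {d d' : Fin n → ℕ} {f g : (Fin n → ℝ) → ℝ}
    (hf : f ∈ Submodule.span ℝ (trigMon n d)) (hg : g ∈ Submodule.span ℝ (trigMon n d')) :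
    f * g ∈ Submodule.span ℝ (trigMon n (d + d')) := by
  have hmem : f * g ∈ Submodule.span ℝ (trigMon n d) * Submodule.span ℝ (trigMon n d') :=
    Submodule.mul_mem_mul hf hg
  rw [Submodule.span_mul_span] at hmem
  refine Submodule.span_mono ?_ hmem
  rintro x hx
  rw [Set.mem_mul] at hx
  obtain ⟨p, hp, q', hq, rfl⟩ := hx
  obtain ⟨a, b, hab, rfl⟩ := hp
  obtain ⟨a', b', hab', rfl⟩ := hq
  refine ⟨a + a', b + b', fun m => ?_, ?_⟩
  · have := hab m
    have := hab' m
    simp only [Pi.add_apply]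
    omega
  · funext θ
    simp only [Pi.mul_apply]
    rw [← Finset.prod_mul_distrib]
    refine Finset.prod_congr rfl fun m _ => ?_
    simp only [Pi.add_apply, pow_add]
    ring

lemma exp_entry_mem {n : ℕ} (j : Fin n) (A : Matrix N N ℝ) (hA : A ^ 3 = -A) (r c : N) :
    (fun θ : Fin n → ℝ => NormedSpace.exp (θ j • A) r c) ∈
      Submodule.span ℝ (trigMon n (Pi.single j 1)) := by
  have key : (fun θ : Fin n → ℝ => NormedSpace.exp (θ j • A) r c)
      = (fun _ : Fin n → ℝ => (1 : Matrix N N ℝ) r c + (A ^ 2) r c)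
        + (A r c) • (fun θ : Fin n → ℝ => Real.sin (θ j))
        + (-((A ^ 2) r c)) • (fun θ : Fin n → ℝ => Real.cos (θ j)) := by
    funext θ
    rw [exp_smul_of_cube hA]
    simp only [Matrix.add_apply, Matrix.smul_apply, smul_eq_mul, Pi.add_apply, Pi.smul_apply,
      smul_eq_mul]
    ring
  rw [key]
  refine Submodule.add_mem _ (Submodule.add_mem _ (const_mem_span_trigMon _) ?_) ?_
  · exact Submodule.smul_mem _ _ (Submodule.subset_span (sin_mem_trigMon j))
  · exact Submodule.smul_mem _ _ (Submodule.subset_span (cos_mem_trigMon j))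

lemma list_prod_entry_mem {n : ℕ} (E : Fin n → (Fin n → ℝ) → Matrix N N ℝ)
    (hE : ∀ j r c, (fun θ => E j θ r c) ∈ Submodule.span ℝ (trigMon n (Pi.single j 1)))
    (l : List (Fin n)) (r c : N) :
    (fun θ => ((l.map fun m => E m θ).prod) r c) ∈
      Submodule.span ℝ (trigMon n fun j => l.count j) := by
  induction l generalizing r c with
  | nil =>
      simp only [List.map_nil, List.prod_nil]
      have h : (fun _ : Fin n → ℝ => (1 : Matrix N N ℝ) r c)
          = fun _ : Fin n → ℝ => ((1 : Matrix N N ℝ) r c) := rfl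
      exact const_mem_span_trigMon _
  | cons m l ih =>
      have hsplit : (fun θ => (((m :: l).map fun m' => E m' θ).prod) r c)
          = ∑ k : N, (fun θ => E m θ r k) * (fun θ => ((l.map fun m' => E m' θ).prod) k c) := by
        funext θ
        simp [Matrix.mul_apply, Finset.sum_apply]
      have hd : (fun j => (m :: l).count j) = Pi.single m 1 + fun j => l.count j := by
        funext j
        by_cases hjm : j = m <;>
          simp [List.count_cons, Pi.single_apply, hjm, Nat.add_comm] <;>
          exact fun h => hjm h.symm
      rw [hsplit, hd]
      exact Submodule.sum_mem _ fun k _ => mul_mem_span_trigMon (hE m r k) (ih k c)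

end Aux

/-- **Trigonometric decomposition lemma.** For a chain of `n` zero-pitch revolute joints
with unit axes `ω_m` through points `q_m`, every entry of
`G(θ) = exp(θ₁ ξ̂₁) ⋯ exp(θ_n ξ̂_n)` is a real-linear combination of trigonometric
monomials of per-joint degree at most 1, and every entry of `G(θ)ᵀ X G(θ)` is a
real-linear combination of trigonometric monomials of per-joint degree at most 2. -/
theorem poe_trig_decomposition (n : ℕ) (ω : Fin n → EuclideanSpace ℝ (Fin 3))
    (q : Fin n → Fin 3 → ℝ) (hω : ∀ m, ‖ω m‖ = 1)
    (G : (Fin n → ℝ) → Matrix (Fin 3 ⊕ Fin 1) (Fin 3 ⊕ Fin 1) ℝ)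
    (hG : G = fun θ => (((List.finRange n).map fun m =>
        NormedSpace.exp (θ m • se3hat (-(crossProduct (ω m) (q m))) (ω m))).prod)) :
    (∀ r c, (fun θ => G θ r c) ∈ Submodule.span ℝ (trigMonomials n 1)) ∧
    (∀ X : Matrix (Fin 3 ⊕ Fin 1) (Fin 3 ⊕ Fin 1) ℝ, ∀ r c,
      (fun θ => ((G θ)ᵀ * X * G θ) r c) ∈ Submodule.span ℝ (trigMonomials n 2)) := by
  subst hG
  -- square norm condition
  have hsq : ∀ m, (ω m) 0 ^ 2 + (ω m) 1 ^ 2 + (ω m) 2 ^ 2 = 1 := by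
    intro m
    have h := hω m
    rw [EuclideanSpace.norm_eq] at h
    have h2 : ∑ i, ‖(ω m) i‖ ^ 2 = 1 := by
      rw [Real.sqrt_eq_one] at h
      exact h
    simpa [Fin.sum_univ_three, Real.norm_eq_abs, sq_abs] using h2
  set E : Fin n → (Fin n → ℝ) → Matrix (Fin 3 ⊕ Fin 1) (Fin 3 ⊕ Fin 1) ℝ :=
    fun m θ => NormedSpace.exp (θ m • se3hat (-(crossProduct (ω m) (q m))) (ω m)) with hEdef
  have hE : ∀ j r c, (fun θ => E j θ r c) ∈ Submodule.span ℝ (trigMon n (Pi.single j 1)) := by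
    intro j r c
    exact exp_entry_mem j _ (se3hat_cube (ω j) (q j) (hsq j)) r c
  have hcount : (fun j => (List.finRange n).count j) = fun _ : Fin n => 1 := by
    funext j
    exact List.count_eq_one_of_mem (List.nodup_finRange n) (List.mem_finRange j)
  have hmain : ∀ r c, (fun θ => (((List.finRange n).map fun m => E m θ).prod) r c) ∈
      Submodule.span ℝ (trigMon n fun _ => 1) := by
    intro r c
    have h := list_prod_entry_mem E hE (List.finRange n) r c
    rwa [hcount] at h
  constructor
  · intro r c
    rw [← trigMon_const n 1]
    exact hmain r c
  · intro X r c
    have hsplit : (fun θ => (((((List.finRange n).map fun m => E m θ).prod))ᵀ * X *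
          (((List.finRange n).map fun m => E m θ).prod)) r c)
        = ∑ k : Fin 3 ⊕ Fin 1, ∑ j : Fin 3 ⊕ Fin 1, (X j k) •
            ((fun θ => (((List.finRange n).map fun m => E m θ).prod) j r) *
             (fun θ => (((List.finRange n).map fun m => E m θ).prod) k c)) := by
      funext θ
      simp only [Matrix.mul_apply, Matrix.transpose_apply, Finset.sum_apply, Pi.smul_apply,
        Pi.mul_apply, smul_eq_mul, Finset.sum_mul]
      refine Finset.sum_congr rfl fun k _ => Finset.sum_congr rfl fun j _ => ?_
      ring
    rw [hsplit]
    refine Submodule.sum_mem _ fun k _ => Submodule.sum_mem _ fun j _ =>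
      Submodule.smul_mem _ _ ?_
    have h2 := mul_mem_span_trigMon (hmain j r) (hmain k c)
    have hdeg : ((fun _ : Fin n => 1) + fun _ : Fin n => 1) = fun _ : Fin n => 2 := by
      funext j'; rfl
    rw [hdeg] at h2
    rw [← trigMon_const n 2]
    exact h2
end

section
/- Let ω, q ∈ ℝ³ with ‖ω‖ = 1 and ξ := (−ω × q, ω) ∈ ℝ⁶, and let θ ∈ ℝ. Write exp(θ ξ̂) = [[R(θ), p(θ)], [0₁ₓ₃, 1]] and let Ad_{exp(θ ξ̂)} := [[R(θ), p̂(θ) R(θ)], [0₃ₓ₃, R(θ)]] ∈ ℝ^{6×6}. Then every entry of the map θ ↦ Ad_{exp(θ ξ̂)} is a real-linear combination of the six functions 1, sin θ, cos θ, sin²θ, sin θ cos θ, cos²θ. -/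
open Matrix

section AuxLemmas

private lemma aux_pow_odd_of_cube {n : Type*} [Fintype n] [DecidableEq n]
    (M : Matrix n n ℝ) (hM : M ^ 3 = -M) (k : ℕ) :
    M ^ (2 * k + 1) = ((-1 : ℝ) ^ k) • M := by
  induction k with
  | zero => simp
  | succ k ih =>
    rw [show 2 * (k + 1) + 1 = (2 * k + 1) + 2 from by ring, pow_add, ih, smul_mul_assoc,
      show M * M ^ 2 = M ^ 3 from (pow_succ' M 2).symm, hM, pow_succ, mul_smul]
    simp

private lemma aux_pow_even_of_cube {n : Type*} [Fintype n] [DecidableEq n]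
    (M : Matrix n n ℝ) (hM : M ^ 3 = -M) (k : ℕ) :
    M ^ (2 * (k + 1)) = ((-1 : ℝ) ^ k) • M ^ 2 := by
  induction k with
  | zero => simp
  | succ k ih =>
    rw [show 2 * (k + 1 + 1) = (2 * (k + 1)) + 2 from by ring, pow_add, ih, smul_mul_assoc,
      ← pow_add, show 2 + 2 = 3 + 1 from rfl, pow_add, hM,
      show ((-1:ℝ)) ^ (k+1) = (-1)^k * (-1) from pow_succ _ _, mul_smul]
    congr 1
    simp [sq]

set_option maxHeartbeats 1000000 in
private lemma aux_exp_cube {n : Type*} [Fintype n] [DecidableEq n]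
    (M : Matrix n n ℝ) (hM : M ^ 3 = -M) (θ : ℝ) :
    NormedSpace.exp (θ • M) = 1 + Real.sin θ • M + (1 - Real.cos θ) • M ^ 2 := by
  have hterm : ∀ m : ℕ, ((m.factorial : ℝ)⁻¹) • (θ • M) ^ m = (θ ^ m / m.factorial) • M ^ m := by
    intro m
    rw [smul_pow, smul_smul, div_eq_inv_mul, mul_comm]
  have hodd : HasSum (fun k : ℕ => ((((2 * k + 1).factorial : ℝ))⁻¹) • (θ • M) ^ (2 * k + 1))
      (Real.sin θ • M) := by
    have h := (Real.hasSum_sin θ).smul_const M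
    convert h using 2 with k
    rw [hterm, aux_pow_odd_of_cube M hM, smul_smul]
    congr 1
    ring
  have heven : HasSum (fun k : ℕ => ((((2 * k).factorial : ℝ))⁻¹) • (θ • M) ^ (2 * k))
      (1 + (1 - Real.cos θ) • M ^ 2) := by
    have hc := Real.hasSum_cos θ
    have hc1 : HasSum (fun k : ℕ => -((-1 : ℝ) ^ (k + 1) * θ ^ (2 * (k + 1)) / (2 * (k + 1)).factorial))
        (1 - Real.cos θ) := by
      have h0 : HasSum (fun k : ℕ => (-1 : ℝ) ^ (k + 1) * θ ^ (2 * (k + 1)) / (2 * (k + 1)).factorial)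
          (Real.cos θ - 1) :=
        (hasSum_nat_add_iff (f := fun k : ℕ => (-1 : ℝ) ^ k * θ ^ (2 * k) / (2 * k).factorial) 1).2
          (by simpa using hc)
      simpa using h0.neg
    have h2 := hc1.smul_const (M ^ 2)
    have h3 : HasSum (fun k : ℕ => ((((2 * (k + 1)).factorial : ℝ))⁻¹) • (θ • M) ^ (2 * (k + 1)))
        ((1 - Real.cos θ) • M ^ 2) := by
      convert h2 using 2 with k
      rw [hterm, aux_pow_even_of_cube M hM, smul_smul]
      congr 1
      ring
    have h4 := (hasSum_nat_add_iff
      (f := fun k : ℕ => ((((2 * k).factorial : ℝ))⁻¹) • (θ • M) ^ (2 * k)) 1).1 h3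
    convert h4 using 1
    · rfl
    simp
    abel
  have key := HasSum.even_add_odd
    (f := fun m : ℕ => (((m.factorial : ℝ))⁻¹) • (θ • M) ^ m) heven hodd
  rw [NormedSpace.exp_eq_tsum (𝕂 := ℝ)]
  beta_reduce
  rw [key.tsum_eq]
  abel

private lemma aux_span6_mem (c0 c1 c2 c3 c4 c5 : ℝ) (f : ℝ → ℝ)
    (hf : ∀ θ, f θ = c0 + c1 * Real.sin θ + c2 * Real.cos θ + c3 * Real.sin θ ^ 2 +
      c4 * (Real.sin θ * Real.cos θ) + c5 * Real.cos θ ^ 2) :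
    f ∈ Submodule.span ℝ
      ({fun _ => 1, Real.sin, Real.cos, fun θ => Real.sin θ ^ 2,
        fun θ => Real.sin θ * Real.cos θ, fun θ => Real.cos θ ^ 2} : Set (ℝ → ℝ)) := by
  have hf' : f = c0 • (fun _ => (1:ℝ)) + c1 • Real.sin + c2 • Real.cos +
      c3 • (fun θ => Real.sin θ ^ 2) + c4 • (fun θ => Real.sin θ * Real.cos θ) +
      c5 • (fun θ => Real.cos θ ^ 2) := by
    funext θ
    simpa using hf θ
  rw [hf']
  refine Submodule.add_mem _ (Submodule.add_mem _ (Submodule.add_mem _ (Submodule.add_mem _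
    (Submodule.add_mem _ ?_ ?_) ?_) ?_) ?_) ?_ <;>
    exact Submodule.smul_mem _ _ (Submodule.subset_span (by simp))

private lemma aux_lin_mul_lin_mem (a b c d e f : ℝ) (g : ℝ → ℝ)
    (hg : ∀ θ, g θ = (a + b * Real.sin θ + c * Real.cos θ) *
      (d + e * Real.sin θ + f * Real.cos θ)) :
    g ∈ Submodule.span ℝ
      ({fun _ => 1, Real.sin, Real.cos, fun θ => Real.sin θ ^ 2,
        fun θ => Real.sin θ * Real.cos θ, fun θ => Real.cos θ ^ 2} : Set (ℝ → ℝ)) := by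
  refine aux_span6_mem (a * d) (a * e + b * d) (a * f + c * d) (b * e) (b * f + c * e) (c * f) g ?_
  intro θ
  rw [hg θ]
  ring

private lemma aux_vec3_eta (ω : Fin 3 → ℝ) : ω = ![ω 0, ω 1, ω 2] := by
  funext i; fin_cases i <;> rfl

private lemma aux_hat_cube (a b c : ℝ) (h : a^2 + b^2 + c^2 = 1) :
    hat ![a,b,c] * hat ![a,b,c] * hat ![a,b,c] = -(hat ![a,b,c]) := by
  ext i j
  fin_cases i <;> fin_cases j <;>
    simp [hat, Matrix.mul_apply, Fin.sum_univ_three] <;>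
    first
      | ring1
      | linear_combination a * h
      | linear_combination (-a) * h
      | linear_combination b * h
      | linear_combination (-b) * h
      | linear_combination c * h
      | linear_combination (-c) * h

private lemma aux_hat_sq_cross (a b c d e f : ℝ) (h : a^2 + b^2 + c^2 = 1) :
    hat ![a,b,c] * hat ![a,b,c] *
      (Matrix.of fun i (_ : Fin 1) => (-(crossProduct ![a,b,c] ![d,e,f])) i) =
    -(Matrix.of fun i (_ : Fin 1) => (-(crossProduct ![a,b,c] ![d,e,f])) i) := by
  ext i j
  fin_cases i <;> fin_cases j <;>
    simp [hat, Matrix.mul_apply, Fin.sum_univ_three, cross_apply] <;>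
    first
      | ring1
      | linear_combination (b * f - c * e) * h
      | linear_combination (-(b * f - c * e)) * h
      | linear_combination (c * d - a * f) * h
      | linear_combination (-(c * d - a * f)) * h
      | linear_combination (a * e - b * d) * h
      | linear_combination (-(a * e - b * d)) * h

end AuxLemmas

/-- For a zero-pitch revolute twist `ξ = (−ω × q, ω)` with `‖ω‖ = 1`, writing
`exp(θ ξ̂) = [[R(θ), p(θ)], [0, 1]]`, every entry of the Adjoint matrix
`Ad_{exp(θ ξ̂)} = [[R(θ), p̂(θ) R(θ)], [0, R(θ)]]` is a real-linear combination of
`1, sin θ, cos θ, sin²θ, sin θ cos θ, cos²θ`. -/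
theorem adjoint_exp_trig (ω : EuclideanSpace ℝ (Fin 3)) (q : Fin 3 → ℝ) (hω : ‖ω‖ = 1)
    (R : ℝ → Matrix (Fin 3) (Fin 3) ℝ) (p : ℝ → Fin 3 → ℝ)
    (hRp : ∀ θ : ℝ, NormedSpace.exp (θ • se3hat (-(crossProduct ω q)) ω) =
      Matrix.fromBlocks (R θ) (Matrix.of fun i (_ : Fin 1) => p θ i) 0 1) :
    ∀ a b : Fin 3 ⊕ Fin 3,
      (fun θ : ℝ =>
          (Matrix.fromBlocks (R θ) (hat (p θ) * R θ) 0 (R θ)) a b) ∈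
        Submodule.span ℝ
          ({fun _ => 1, Real.sin, Real.cos, fun θ => Real.sin θ ^ 2,
            fun θ => Real.sin θ * Real.cos θ, fun θ => Real.cos θ ^ 2} :
            Set (ℝ → ℝ)) := by
  have hsq : ω 0 ^ 2 + ω 1 ^ 2 + ω 2 ^ 2 = 1 := by
    rw [EuclideanSpace.norm_eq, Real.sqrt_eq_one] at hω
    simpa [Fin.sum_univ_three, Real.norm_eq_abs, sq_abs] using hω
  have hωe : (ω : Fin 3 → ℝ) = ![ω 0, ω 1, ω 2] := aux_vec3_eta ω
  have hqe : q = ![q 0, q 1, q 2] := aux_vec3_eta q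
  -- notation
  set v : Fin 3 → ℝ := -(crossProduct ω q) with hv
  set Ω : Matrix (Fin 3) (Fin 3) ℝ := hat ω with hΩdef
  set V : Matrix (Fin 3) (Fin 1) ℝ := Matrix.of fun i (_ : Fin 1) => v i with hVdef
  set M : Matrix (Fin 3 ⊕ Fin 1) (Fin 3 ⊕ Fin 1) ℝ := se3hat v ω with hMdef
  have hΩ3 : Ω * Ω * Ω = -Ω := by
    have h := aux_hat_cube (ω 0) (ω 1) (ω 2) hsq
    rw [← hωe] at h
    exact h
  have hΩ2V : Ω * Ω * V = -V := by
    have h := aux_hat_sq_cross (ω 0) (ω 1) (ω 2) (q 0) (q 1) (q 2) hsq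
    rw [← hωe, ← hqe] at h
    exact h
  have hM3 : M ^ 3 = -M := by
    rw [hMdef, se3hat, pow_succ, sq, Matrix.fromBlocks_multiply, Matrix.fromBlocks_multiply,
      Matrix.fromBlocks_neg]
    simp only [Matrix.mul_zero, Matrix.zero_mul, add_zero, zero_add, neg_zero]
    rw [← hΩdef, ← hVdef, hΩ3, hΩ2V]
  have hM2 : M * M = Matrix.fromBlocks (Ω * Ω) (Ω * V) 0 0 := by
    rw [hMdef, se3hat, Matrix.fromBlocks_multiply]
    simp only [Matrix.mul_zero, Matrix.zero_mul, add_zero, zero_add, neg_zero]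
    rfl
  have hblocks : ∀ θ : ℝ, Matrix.fromBlocks (R θ) (Matrix.of fun i (_ : Fin 1) => p θ i) 0 1
      = Matrix.fromBlocks (1 + Real.sin θ • Ω + (1 - Real.cos θ) • (Ω * Ω))
          (Real.sin θ • V + (1 - Real.cos θ) • (Ω * V)) (0 : Matrix (Fin 1) (Fin 3) ℝ)
          (1 : Matrix (Fin 1) (Fin 1) ℝ) := by
    intro θ
    rw [← hRp θ, aux_exp_cube _ hM3 θ, sq, hM2, hMdef, se3hat,
      ← Matrix.fromBlocks_one (l := Fin 3) (m := Fin 1),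
      Matrix.fromBlocks_smul, Matrix.fromBlocks_smul, Matrix.fromBlocks_add,
      Matrix.fromBlocks_add]
    simp only [smul_zero, add_zero, zero_add]
    rfl
  have hR : ∀ θ : ℝ, R θ = 1 + Real.sin θ • Ω + (1 - Real.cos θ) • (Ω * Ω) := by
    intro θ
    have h := congrArg Matrix.toBlocks₁₁ (hblocks θ)
    simpa [Matrix.toBlocks_fromBlocks₁₁] using h
  have hp : ∀ (θ : ℝ) (i : Fin 3), p θ i =
      Real.sin θ * v i + (1 - Real.cos θ) * ((Ω * V) i 0) := by
    intro θ i
    have h := congrArg Matrix.toBlocks₁₂ (hblocks θ)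
    simp only [Matrix.toBlocks_fromBlocks₁₂] at h
    have h2 := congrFun (congrFun h i) 0
    simpa [Matrix.add_apply, Matrix.smul_apply, smul_eq_mul, hVdef] using h2
  -- linear forms of entries
  have hRe : ∀ (θ : ℝ) (k j : Fin 3), R θ k j =
      ((1 : Matrix (Fin 3) (Fin 3) ℝ) k j + (Ω * Ω) k j) + Ω k j * Real.sin θ +
        (-((Ω * Ω) k j)) * Real.cos θ := by
    intro θ k j
    rw [hR θ]
    simp [Matrix.add_apply, Matrix.smul_apply, smul_eq_mul]
    ring
  set w : Fin 3 → ℝ := fun m => (Ω * V) m 0 with hw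
  set W : Matrix (Fin 3) (Fin 3) ℝ := hat w with hW
  have hhat : ∀ (θ : ℝ) (i k : Fin 3), hat (p θ) i k =
      W i k + hat v i k * Real.sin θ + (-(W i k)) * Real.cos θ := by
    intro θ i k
    fin_cases i <;> fin_cases k <;>
      simp [hat, hp, hW, hw] <;> ring
  intro a b
  rcases a with i | i <;> rcases b with j | j
  · -- upper-left block: R θ i j
    refine aux_span6_mem ((1 : Matrix (Fin 3) (Fin 3) ℝ) i j + (Ω * Ω) i j) (Ω i j)
      (-((Ω * Ω) i j)) 0 0 0 _ ?_
    intro θ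
    simp only [Matrix.fromBlocks_apply₁₁]
    rw [hRe θ i j]
    ring
  · -- upper-right block: (hat (p θ) * R θ) i j
    have hfun : (fun θ : ℝ =>
        (Matrix.fromBlocks (R θ) (hat (p θ) * R θ) 0 (R θ)) (Sum.inl i) (Sum.inr j)) =
        (fun θ : ℝ => hat (p θ) i 0 * R θ 0 j) + (fun θ : ℝ => hat (p θ) i 1 * R θ 1 j) +
          (fun θ : ℝ => hat (p θ) i 2 * R θ 2 j) := by
      funext θ
      simp [Matrix.fromBlocks_apply₁₂, Matrix.mul_apply, Fin.sum_univ_three]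
    rw [hfun]
    refine Submodule.add_mem _ (Submodule.add_mem _ ?_ ?_) ?_
    · refine aux_lin_mul_lin_mem (W i 0) (hat v i 0) (-(W i 0))
        ((1 : Matrix (Fin 3) (Fin 3) ℝ) 0 j + (Ω * Ω) 0 j) (Ω 0 j) (-((Ω * Ω) 0 j)) _ ?_
      intro θ
      rw [hhat θ i 0, hRe θ 0 j]
    · refine aux_lin_mul_lin_mem (W i 1) (hat v i 1) (-(W i 1))
        ((1 : Matrix (Fin 3) (Fin 3) ℝ) 1 j + (Ω * Ω) 1 j) (Ω 1 j) (-((Ω * Ω) 1 j)) _ ?_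
      intro θ
      rw [hhat θ i 1, hRe θ 1 j]
    · refine aux_lin_mul_lin_mem (W i 2) (hat v i 2) (-(W i 2))
        ((1 : Matrix (Fin 3) (Fin 3) ℝ) 2 j + (Ω * Ω) 2 j) (Ω 2 j) (-((Ω * Ω) 2 j)) _ ?_
      intro θ
      rw [hhat θ i 2, hRe θ 2 j]
  · -- lower-left block: 0
    have hfun : (fun θ : ℝ =>
        (Matrix.fromBlocks (R θ) (hat (p θ) * R θ) 0 (R θ)) (Sum.inr i) (Sum.inl j)) =
        (0 : ℝ → ℝ) := by
      funext θ
      simp [Matrix.fromBlocks_apply₂₁]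
    rw [hfun]
    exact Submodule.zero_mem _
  · -- lower-right block: R θ i j
    refine aux_span6_mem ((1 : Matrix (Fin 3) (Fin 3) ℝ) i j + (Ω * Ω) i j) (Ω i j)
      (-((Ω * Ω) i j)) 0 0 0 _ ?_
    intro θ
    simp only [Matrix.fromBlocks_apply₂₂]
    rw [hRe θ i j]
    ring
end
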